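/- Let n, δ ∈ ℕ and let G be an n-vertex finite simple graph with minimum degree at least δ. Then for every integer s with 2 ≤ s and s ≤ n − δ + 1, one has s · i_s(G) ≤ (n − δ − s + 1) · i_{s−1}(G). -/

import Mathlib

open Finset

/-- `numIndep G t` is the number of independent sets of size `t` in `G`, i.e. the number of
`t`-element subsets of the vertex set containing no edge. -/
def numIndep {V : Type*} (G : SimpleGraph V) [Fintype V] [DecidableEq V] [DecidableRel G.Adj]
    (t : ℕ) : ℕ :=
  (((univ : Finset V).powersetCard t).filter fun s => ∀ u ∈ s, ∀ v ∈ s, ¬ G.Adj u v).card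

theorem stmt_10_nat {V : Type*} [Fintype V] [DecidableEq V] (G : SimpleGraph V)
    [DecidableRel G.Adj]
    (n δ : ℕ) (hn : Fintype.card V = n) (hδ : ∀ v : V, δ ≤ G.degree v)
    (s : ℕ) (hs2 : 2 ≤ s) :
    s * numIndep G s ≤ (n + 1 - δ - s) * numIndep G (s - 1) := by
  classical
  set St : ℕ → Finset (Finset V) := fun t =>
    ((univ : Finset V).powersetCard t).filter fun A => ∀ u ∈ A, ∀ v ∈ A, ¬ G.Adj u v with hSt
  have hnum : ∀ t, numIndep G t = (St t).card := fun t => rfl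
  set ext : Finset V → Finset V := fun B =>
    univ.filter fun v => v ∉ B ∧ insert v B ∈ St s with hext
  -- key bound on extensions
  have key : ∀ B ∈ St (s - 1), (ext B).card ≤ n + 1 - δ - s := by
    intro B hB
    obtain ⟨hBp, hBi⟩ := Finset.mem_filter.mp hB
    have hBcard : B.card = s - 1 := (Finset.mem_powersetCard.mp hBp).2
    obtain ⟨u, hu⟩ : B.Nonempty := Finset.card_pos.mp (by omega)
    have hdisj : Disjoint (G.neighborFinset u) B := by
      rw [Finset.disjoint_left]
      intro w hw hwB
      exact hBi u hu w hwB (by simpa [SimpleGraph.mem_neighborFinset] using hw)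
    have hsub : ext B ⊆ univ \ (G.neighborFinset u ∪ B) := by
      intro v hv
      simp only [hext, Finset.mem_filter, Finset.mem_univ, true_and] at hv
      obtain ⟨hvB, hvins⟩ := hv
      have hvind := (Finset.mem_filter.mp hvins).2
      simp only [Finset.mem_sdiff, Finset.mem_univ, true_and, Finset.mem_union,
        SimpleGraph.mem_neighborFinset, not_or]
      refine ⟨fun hadj => ?_, hvB⟩
      exact hvind v (Finset.mem_insert_self v B) u (Finset.mem_insert_of_mem hu) hadj.symm
    have hle : (G.neighborFinset u ∪ B).card ≤ n := by
      rw [← hn, ← Finset.card_univ]; exact Finset.card_le_card (Finset.subset_univ _)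
    have hcard : (ext B).card ≤ n - (G.degree u + (s - 1)) := by
      calc (ext B).card ≤ (univ \ (G.neighborFinset u ∪ B)).card :=
            Finset.card_le_card hsub
        _ = n - (G.neighborFinset u ∪ B).card := by
            rw [Finset.card_sdiff_of_subset (Finset.subset_univ _), Finset.card_univ, hn]
        _ = n - (G.degree u + (s - 1)) := by
            rw [Finset.card_union_of_disjoint hdisj, hBcard,
              SimpleGraph.card_neighborFinset_eq_degree]
    have hdu : δ ≤ G.degree u := hδ u
    have hle2 : G.degree u + (s - 1) ≤ n := by
      have h := Finset.card_union_of_disjoint hdisj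
      rw [hBcard, SimpleGraph.card_neighborFinset_eq_degree] at h
      omega
    omega
  -- double counting via sigma sets
  set P : Finset ((_ : Finset V) × V) := (St s).sigma (fun A => A) with hP
  set Q : Finset ((_ : Finset V) × V) := (St (s - 1)).sigma ext with hQ
  have hPcard : P.card = s * (St s).card := by
    rw [hP, Finset.card_sigma]
    rw [Finset.sum_congr rfl (fun A hA => (Finset.mem_powersetCard.mp
      (Finset.mem_filter.mp hA).1).2)]
    rw [Finset.sum_const, smul_eq_mul, mul_comm]
  have hQcard : Q.card ≤ (n + 1 - δ - s) * (St (s - 1)).card := by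
    rw [hQ, Finset.card_sigma]
    calc ∑ B ∈ St (s - 1), (ext B).card ≤ ∑ _B ∈ St (s - 1), (n + 1 - δ - s) :=
          Finset.sum_le_sum key
      _ = (n + 1 - δ - s) * (St (s - 1)).card := by
          rw [Finset.sum_const, smul_eq_mul, mul_comm]
  have hPQ : P.card ≤ Q.card := by
    apply Finset.card_le_card_of_injOn (fun p => ⟨p.1.erase p.2, p.2⟩)
    · rintro ⟨A, v⟩ hp
      rw [hP, Finset.mem_coe, Finset.mem_sigma] at hp
      obtain ⟨hA, hv⟩ := hp
      obtain ⟨hAp, hAi⟩ := Finset.mem_filter.mp hA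
      obtain ⟨hAsub, hAcard⟩ := Finset.mem_powersetCard.mp hAp
      rw [hQ, Finset.mem_coe, Finset.mem_sigma]
      constructor
      · refine Finset.mem_filter.mpr ⟨Finset.mem_powersetCard.mpr
          ⟨(Finset.erase_subset _ _).trans hAsub, ?_⟩, ?_⟩
        · rw [Finset.card_erase_of_mem hv, hAcard]
        · intro a ha b hb
          exact hAi a (Finset.mem_of_mem_erase ha) b (Finset.mem_of_mem_erase hb)
      · simp only [hext, Finset.mem_filter, Finset.mem_univ, true_and]
        exact ⟨Finset.notMem_erase v A, by rw [Finset.insert_erase hv]; exact hA⟩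
    · rintro ⟨A, v⟩ hp ⟨A', v'⟩ hp' heq
      simp only [hP, Finset.mem_coe, Finset.mem_sigma] at hp hp'
      obtain ⟨h1, h2⟩ := Sigma.mk.inj_iff.mp heq
      have hv' : v = v' := eq_of_heq h2
      subst hv'
      have : A.erase v = A'.erase v := h1
      have hA : A = A' := by
        rw [← Finset.insert_erase hp.2, ← Finset.insert_erase hp'.2, this]
      subst hA
      rfl
  rw [hnum, hnum, ← hPcard]
  exact hPQ.trans hQcard

/-- Let `n, δ ∈ ℕ` and let `G` be an `n`-vertex finite simple graph with minimum degree at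
least `δ`.  Then for every integer `s` with `2 ≤ s` and `s ≤ n − δ + 1`, one has
`s · i_s(G) ≤ (n − δ − s + 1) · i_{s−1}(G)` (as integers). -/
theorem stmt_10 {V : Type*} [Fintype V] [DecidableEq V] (G : SimpleGraph V) [DecidableRel G.Adj]
    (n δ : ℕ) (hn : Fintype.card V = n) (hδ : ∀ v : V, δ ≤ G.degree v)
    (s : ℕ) (hs2 : 2 ≤ s) (hs : (s : ℤ) ≤ (n : ℤ) - δ + 1) :
    (s : ℤ) * numIndep G s ≤ ((n : ℤ) - δ - s + 1) * numIndep G (s - 1) := by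
  have hN := stmt_10_nat G n δ hn hδ s hs2
  have hc : ((n : ℤ) - δ - s + 1) = ((n + 1 - δ - s : ℕ) : ℤ) := by omega
  rw [hc]
  exact_mod_cast hN
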